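/- The Choquet integral with respect to H^α_μ is countably sublinear: for any sequence of nonnegative functions f_j on K, ∫_K Σ_j f_j dH^α_μ ≤ Σ_j ∫_K f_j dH^α_μ. -/

import Mathlib

open MeasureTheory Set Filter
open scoped ENNReal NNReal Topology

noncomputable section

abbrev Pt (d : ℕ) := EuclideanSpace ℝ (Fin d)

/-- An iterated function system of contractive similitudes on ℝ^d with attractor `K`
satisfying the strong separation condition. -/
structure IFS (d m : ℕ) where
  S : Fin m → Pt d → Pt d
  r : Fin m → ℝ
  r_pos : ∀ i, 0 < r i
  r_lt_one : ∀ i, r i < 1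
  similitude : ∀ i x y, dist (S i x) (S i y) = r i * dist x y
  K : Set (Pt d)
  K_nonempty : K.Nonempty
  K_compact : IsCompact K
  K_invariant : K = ⋃ i, S i '' K
  ssc : Pairwise fun i j => Disjoint (S i '' K) (S j '' K)

namespace IFS

variable {d m : ℕ}

/-- The composition `S_{i₁} ∘ ⋯ ∘ S_{iₙ}` for the word `w = i₁ ⋯ iₙ`. -/
def cylMap (Φ : IFS d m) (w : List (Fin m)) : Pt d → Pt d :=
  w.foldr (fun i g => Φ.S i ∘ g) id

/-- The basic cube (cylinder set) `K_w = S_{i₁} ∘ ⋯ ∘ S_{iₙ}(K)`. -/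
def cyl (Φ : IFS d m) (w : List (Fin m)) : Set (Pt d) :=
  Φ.cylMap w '' Φ.K

/-- `μ` is the self-similar probability measure associated with the probability
vector `p` (with all `p i > 0`), i.e. `μ = ∑ i, p i • μ ∘ S i ⁻¹`, supported on `K`. -/
def SelfSimilar (Φ : IFS d m) (p : Fin m → ℝ≥0∞) (μ : Measure (Pt d)) : Prop :=
  (∑ i, p i = 1) ∧ (∀ i, 0 < p i) ∧ IsProbabilityMeasure μ ∧ μ Φ.K = 1 ∧
    μ = ∑ i, p i • μ.map (Φ.S i)

/-- The α-dimensional Hausdorff content on `K` associated with `μ`, defined via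
coverings by countable families of basic cubes; `s` is the Hausdorff dimension of `K`. -/
def hContent (Φ : IFS d m) (μ : Measure (Pt d)) (s α : ℝ) (E : Set (Pt d)) : ℝ≥0∞ :=
  ⨅ (C : Set (List (Fin m))) (_ : C.Countable) (_ : E ⊆ ⋃ w ∈ C, Φ.cyl w),
    ∑' w : C, μ (Φ.cyl w.1) ^ (α / s)

/-- The dyadic-type Hardy–Littlewood maximal operator over basic cubes containing `x`. -/
def maxOp (Φ : IFS d m) (μ : Measure (Pt d)) (f : Pt d → ℝ) (x : Pt d) : ℝ≥0∞ :=
  ⨆ (w : List (Fin m)) (_ : x ∈ Φ.cyl w),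
    (μ (Φ.cyl w))⁻¹ * ∫⁻ y in Φ.cyl w, ENNReal.ofReal |f y| ∂μ

end IFS

/-- The Choquet integral of `g` over `E` with respect to the monotone set function `ν`. -/
def choquetInt {X : Type*} (ν : Set X → ℝ≥0∞) (E : Set X) (g : X → ℝ≥0∞) : ℝ≥0∞ :=
  ∫⁻ t in Set.Ioi (0 : ℝ), ν {x ∈ E | ENNReal.ofReal t < g x}

/-- `log⁺ t = max (0, log t)`. -/
def posLog (t : ℝ) : ℝ := max 0 (Real.log t)


namespace IFS

variable {d m : ℕ}

variable (Φ : IFS d m)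

lemma S_inj (i : Fin m) : Function.Injective (Φ.S i) := by
  intro x y h
  have hsim := Φ.similitude i x y
  rw [h, dist_self] at hsim
  have hr := Φ.r_pos i
  have : dist x y = 0 := by
    rcases mul_eq_zero.mp hsim.symm with h' | h'
    · exact absurd h' (ne_of_gt hr)
    · exact h'
  exact dist_eq_zero.mp this

lemma cylMap_nil : Φ.cylMap [] = id := rfl

lemma cylMap_cons (i : Fin m) (w : List (Fin m)) :
    Φ.cylMap (i :: w) = Φ.S i ∘ Φ.cylMap w := rfl

lemma foldr_comp (w : List (Fin m)) (c : Pt d → Pt d) :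
    w.foldr (fun i g => Φ.S i ∘ g) c = Φ.cylMap w ∘ c := by
  induction w with
  | nil => rfl
  | cons i w ih => simp [List.foldr_cons, ih, cylMap_cons, Function.comp_assoc]

lemma cylMap_append (a b : List (Fin m)) :
    Φ.cylMap (a ++ b) = Φ.cylMap a ∘ Φ.cylMap b := by
  rw [cylMap, List.foldr_append, foldr_comp]; rfl

lemma cyl_nil : Φ.cyl [] = Φ.K := by simp [cyl, cylMap_nil]

lemma cyl_cons (i : Fin m) (w : List (Fin m)) :
    Φ.cyl (i :: w) = Φ.S i '' Φ.cyl w := by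
  rw [cyl, cyl, cylMap_cons, Set.image_comp]

lemma cyl_subset_K (w : List (Fin m)) : Φ.cyl w ⊆ Φ.K := by
  induction w with
  | nil => rw [cyl_nil]
  | cons i w ih =>
    rw [cyl_cons]
    refine (Set.image_mono ih).trans ?_
    intro y hy
    rw [Φ.K_invariant]
    exact Set.mem_iUnion.mpr ⟨i, hy⟩

lemma cyl_anti {v w : List (Fin m)} (h : v <+: w) : Φ.cyl w ⊆ Φ.cyl v := by
  obtain ⟨u, rfl⟩ := h
  rw [cyl, cylMap_append, Set.image_comp]
  exact (Set.image_mono (Φ.cyl_subset_K u)).trans le_rfl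

lemma exists_cyl {x : Pt d} (hx : x ∈ Φ.K) (n : ℕ) :
    ∃ w : List (Fin m), w.length = n ∧ x ∈ Φ.cyl w := by
  induction n generalizing x with
  | zero => exact ⟨[], rfl, by rwa [cyl_nil]⟩
  | succ n ih =>
    rw [Φ.K_invariant] at hx
    obtain ⟨_, ⟨i, rfl⟩, y, hy, rfl⟩ := hx
    obtain ⟨w, hw, hyw⟩ := ih hy
    exact ⟨i :: w, by simp [hw], by rw [cyl_cons]; exact ⟨y, hyw, rfl⟩⟩

lemma prefix_total {w v : List (Fin m)} {x : Pt d}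
    (hw : x ∈ Φ.cyl w) (hv : x ∈ Φ.cyl v) : w <+: v ∨ v <+: w := by
  induction w generalizing v x with
  | nil => exact Or.inl List.nil_prefix
  | cons i w ih =>
    cases v with
    | nil => exact Or.inr List.nil_prefix
    | cons j v =>
      rw [cyl_cons] at hw hv
      have hij : i = j := by
        by_contra hne
        exact (Φ.ssc hne).ne_of_mem
          (Set.image_mono (Φ.cyl_subset_K w) hw)
          (Set.image_mono (Φ.cyl_subset_K v) hv) rfl
      subst hij
      obtain ⟨y, hy, rfl⟩ := hw
      obtain ⟨y', hy', heq⟩ := hv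
      have : y' = y := Φ.S_inj i heq
      subst this
      rcases ih hy hy' with h | h
      · exact Or.inl (List.cons_prefix_cons.mpr ⟨rfl, h⟩)
      · exact Or.inr (List.cons_prefix_cons.mpr ⟨rfl, h⟩)

lemma hContent_le_cover (μ : Measure (Pt d)) (s α : ℝ) {E : Set (Pt d)}
    {C : Set (List (Fin m))} (hC : C.Countable) (hcov : E ⊆ ⋃ w ∈ C, Φ.cyl w) :
    Φ.hContent μ s α E ≤ ∑' w : C, μ (Φ.cyl w.1) ^ (α / s) := by
  refine iInf_le_of_le C ?_
  exact iInf_le_of_le hC (iInf_le _ hcov)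

lemma hContent_mono (μ : Measure (Pt d)) (s α : ℝ) {E E' : Set (Pt d)}
    (h : E ⊆ E') : Φ.hContent μ s α E ≤ Φ.hContent μ s α E' := by
  refine le_iInf fun C => le_iInf fun hC => le_iInf fun hcov => ?_
  exact Φ.hContent_le_cover μ s α hC (h.trans hcov)

lemma hContent_le_one (μ : Measure (Pt d)) (s α : ℝ) (hμK : μ Φ.K = 1)
    {E : Set (Pt d)} (hE : E ⊆ Φ.K) : Φ.hContent μ s α E ≤ 1 := by
  have hcov : E ⊆ ⋃ w ∈ ({[]} : Set (List (Fin m))), Φ.cyl w := by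
    intro x hx; simp [cyl_nil]; exact hE hx
  refine (Φ.hContent_le_cover μ s α (Set.countable_singleton _) hcov).trans ?_
  have : ∑' w : ({[]} : Set (List (Fin m))), μ (Φ.cyl w.1) ^ (α / s)
      = μ (Φ.cyl []) ^ (α / s) := tsum_singleton ([] : List (Fin m)) (fun w => μ (Φ.cyl w) ^ (α / s))
  rw [this, cyl_nil, hμK, ENNReal.one_rpow]


end IFS

lemma prefix_dropLast' {β : Type*} {v l : List β} (h : v <+: l) (hne : v ≠ l) :
    v <+: l.dropLast := by
  obtain ⟨r, rfl⟩ := h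
  have hr : r ≠ [] := by rintro rfl; simp at hne
  rw [List.dropLast_append_of_ne_nil hr]
  exact ⟨r.dropLast, rfl⟩

namespace IFS

lemma choquet_le_weighted_cover {d m : ℕ} (Φ : IFS d m) (μ : Measure (Pt d)) (s α : ℝ)
    {ι : Type} [Countable ι] (c : ι → ℝ≥0∞) (q : ι → List (Fin m))
    (F : Pt d → ℝ≥0∞)
    (hdom : ∀ x ∈ Φ.K, F x ≤ ∑' i, (Φ.cyl (q i)).indicator (fun _ => c i) x) :
    choquetInt (Φ.hContent μ s α) Φ.K F ≤ ∑' i, c i * μ (Φ.cyl (q i)) ^ (α / s) := by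
  classical
  set W : List (Fin m) → ℝ≥0∞ := fun u => μ (Φ.cyl u) ^ (α / s) with hW
  set b : List (Fin m) → ℝ≥0∞ := fun u => ∑' i, if q i <+: u then c i else 0 with hb
  set c' : List (Fin m) → ℝ≥0∞ := fun u => ∑' i, if q i = u then c i else 0 with hc'
  set M : ℝ → Set (List (Fin m)) :=
    fun t => {u | ENNReal.ofReal t < b u ∧ (u = [] ∨ b u.dropLast ≤ ENNReal.ofReal t)} with hM
  have b_split : ∀ u : List (Fin m), u ≠ [] → b u = b u.dropLast + c' u := by
    intro u hu
    rw [hb, hc']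
    simp only
    rw [← ENNReal.tsum_add]
    refine tsum_congr fun i => ?_
    have hlen : u.dropLast.length < u.length := by
      rw [List.length_dropLast]
      exact Nat.sub_lt (List.length_pos_iff.mpr hu) one_pos
    by_cases h1 : q i = u
    · subst h1
      have h2 : ¬ (q i) <+: (q i).dropLast := fun h => absurd h.length_le (by omega)
      simp [h2]
    · by_cases h3 : q i <+: u
      · have h4 : q i <+: u.dropLast := prefix_dropLast' h3 h1
        simp [h3, h4, h1]
      · have h4 : ¬ q i <+: u.dropLast := fun h => h3 (h.trans (List.dropLast_prefix u))
        simp [h3, h4, h1]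
  have cover : ∀ t : ℝ, {x ∈ Φ.K | ENNReal.ofReal t < F x} ⊆ ⋃ u ∈ M t, Φ.cyl u := by
    intro t x hx
    obtain ⟨hxK, hlt⟩ := hx
    have hlt2 : ENNReal.ofReal t < ∑' i, if x ∈ Φ.cyl (q i) then c i else 0 := by
      refine lt_of_lt_of_le (lt_of_lt_of_le hlt (hdom x hxK)) (le_of_eq ?_)
      exact tsum_congr fun i => Set.indicator_apply _ _ _
    rw [ENNReal.tsum_eq_iSup_sum] at hlt2
    obtain ⟨s0, hs0⟩ := lt_iSup_iff.mp hlt2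
    set s1 := s0.filter (fun i => x ∈ Φ.cyl (q i)) with hs1
    have hsum : ENNReal.ofReal t < ∑ i ∈ s1, c i := by
      rwa [hs1, Finset.sum_filter]
    set n := s1.sup fun i => (q i).length with hn
    obtain ⟨u, hulen, hxu⟩ := Φ.exists_cyl hxK n
    have hpre : ∀ i ∈ s1, q i <+: u := by
      intro i hi
      have hxi : x ∈ Φ.cyl (q i) := (Finset.mem_filter.mp hi).2
      rcases Φ.prefix_total hxi hxu with h | h
      · exact h
      · have : u = q i := h.eq_of_length
          (le_antisymm h.length_le (hulen ▸ Finset.le_sup (f := fun i => (q i).length) hi))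
        exact this ▸ List.prefix_rfl
    have hbu : ENNReal.ofReal t < b u := by
      refine lt_of_lt_of_le hsum ?_
      calc ∑ i ∈ s1, c i = ∑ i ∈ s1, (if q i <+: u then c i else 0) :=
            Finset.sum_congr rfl fun i hi => by simp [hpre i hi]
        _ ≤ b u := ENNReal.sum_le_tsum s1
    have descend : ∀ N (v : List (Fin m)), v.length ≤ N → x ∈ Φ.cyl v →
        ENNReal.ofReal t < b v → ∃ w ∈ M t, x ∈ Φ.cyl w := by
      intro N
      induction N with
      | zero =>
        intro v hvlen hxv hbv
        have hv : v = [] := List.length_eq_zero_iff.mp (Nat.le_zero.mp hvlen)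
        subst hv
        exact ⟨[], ⟨hbv, Or.inl rfl⟩, hxv⟩
      | succ N ih =>
        intro v hvlen hxv hbv
        by_cases hv : v = []
        · subst hv; exact ⟨[], ⟨hbv, Or.inl rfl⟩, hxv⟩
        by_cases hpar : b v.dropLast ≤ ENNReal.ofReal t
        · exact ⟨v, ⟨hbv, Or.inr hpar⟩, hxv⟩
        · push_neg at hpar
          refine ih v.dropLast ?_ (Φ.cyl_anti (List.dropLast_prefix v) hxv) hpar
          rw [List.length_dropLast]
          have : v.length ≠ 0 := fun h => hv (List.length_eq_zero_iff.mp h)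
          omega
    obtain ⟨w, hwM, hxw⟩ := descend u.length u le_rfl hxu hbu
    exact Set.mem_biUnion hwM hxw
  have hSmeas : ∀ u : List (Fin m), MeasurableSet {t : ℝ | u ∈ M t} := by
    intro u
    have h1 : MeasurableSet {t : ℝ | ENNReal.ofReal t < b u} :=
      ENNReal.measurable_ofReal measurableSet_Iio
    by_cases hu : u = []
    · have he : {t : ℝ | u ∈ M t} = {t | ENNReal.ofReal t < b u} := by
        ext t; simp [hM, hu]
      rw [he]; exact h1
    · have he : {t : ℝ | u ∈ M t}
          = {t | ENNReal.ofReal t < b u} ∩ {t | b u.dropLast ≤ ENNReal.ofReal t} := by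
        ext t; simp [hM, hu]
      rw [he]
      exact h1.inter (ENNReal.measurable_ofReal measurableSet_Ici)
  have hvol : ∀ u : List (Fin m), volume ({t : ℝ | u ∈ M t} ∩ Set.Ioi 0) ≤ c' u := by
    intro u
    by_cases hu : u = []
    · subst hu
      have hb0 : b [] = c' [] := by
        rw [hb, hc']
        exact tsum_congr fun i => by simp [List.prefix_nil]
      by_cases htop : b [] = ⊤
      · rw [← hb0, htop]; exact le_top
      · have hsub : {t : ℝ | ([] : List (Fin m)) ∈ M t} ∩ Set.Ioi 0
            ⊆ Set.Ioo 0 (b []).toReal := by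
          rintro t ⟨ht1, ht2⟩
          have h3 : ENNReal.ofReal t < b [] := ht1.1
          exact ⟨ht2, (ENNReal.ofReal_lt_iff_lt_toReal (le_of_lt ht2) htop).mp h3⟩
        calc volume ({t : ℝ | ([] : List (Fin m)) ∈ M t} ∩ Set.Ioi 0)
            ≤ volume (Set.Ioo 0 (b []).toReal) := measure_mono hsub
          _ = ENNReal.ofReal ((b []).toReal - 0) := Real.volume_Ioo
          _ ≤ b [] := by rw [sub_zero]; exact ENNReal.ofReal_toReal_le
          _ = c' [] := hb0
    · have hsplit := b_split u hu
      by_cases hctop : c' u = ⊤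
      · rw [hctop]; exact le_top
      by_cases hptop : b u.dropLast = ⊤
      · have he : {t : ℝ | u ∈ M t} ∩ Set.Ioi 0 = ∅ := by
          ext t
          simp only [Set.mem_inter_iff, Set.mem_empty_iff_false, iff_false, not_and]
          rintro ⟨h1, h2 | h2⟩ h3
          · exact hu h2
          · rw [hptop] at h2
            exact absurd (top_le_iff.mp h2) ENNReal.ofReal_ne_top
        rw [he]; simp
      · have hbtop : b u ≠ ⊤ := by
          rw [hsplit]; exact ENNReal.add_ne_top.mpr ⟨hptop, hctop⟩
        have hsub : {t : ℝ | u ∈ M t} ∩ Set.Ioi 0 ⊆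
            Set.Ico (b u.dropLast).toReal (b u).toReal := by
          rintro t ⟨⟨h1, h2 | h2⟩, h3⟩
          · exact absurd h2 hu
          · exact ⟨(ENNReal.le_ofReal_iff_toReal_le hptop (le_of_lt h3)).mp h2,
              (ENNReal.ofReal_lt_iff_lt_toReal (le_of_lt h3) hbtop).mp h1⟩
        calc volume ({t : ℝ | u ∈ M t} ∩ Set.Ioi 0)
            ≤ volume (Set.Ico (b u.dropLast).toReal (b u).toReal) := measure_mono hsub
          _ = ENNReal.ofReal ((b u).toReal - (b u.dropLast).toReal) := Real.volume_Ico
          _ = ENNReal.ofReal (b u).toReal - ENNReal.ofReal (b u.dropLast).toReal :=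
              ENNReal.ofReal_sub _ ENNReal.toReal_nonneg
          _ = b u - b u.dropLast := by
              rw [ENNReal.ofReal_toReal hbtop, ENNReal.ofReal_toReal hptop]
          _ = c' u := by rw [hsplit, ENNReal.add_sub_cancel_left hptop]
  rw [choquetInt]
  calc ∫⁻ t in Set.Ioi (0:ℝ), Φ.hContent μ s α {x ∈ Φ.K | ENNReal.ofReal t < F x}
      ≤ ∫⁻ t in Set.Ioi (0:ℝ), ∑' u : List (Fin m),
          Set.indicator {t' : ℝ | u ∈ M t'} (fun _ => W u) t := by
        refine setLIntegral_mono' measurableSet_Ioi fun t _ => ?_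
        refine le_trans (Φ.hContent_le_cover μ s α (Set.to_countable _) (cover t)) ?_
        have he : ∑' w : ↑(M t), μ (Φ.cyl w.1) ^ (α / s) = ∑' u, (M t).indicator W u :=
          tsum_subtype (M t) W
        rw [he]
        refine ENNReal.tsum_le_tsum fun u => ?_
        by_cases h : u ∈ M t <;> simp [Set.indicator_apply, h]
    _ = ∑' u : List (Fin m), ∫⁻ t in Set.Ioi (0:ℝ),
          Set.indicator {t' : ℝ | u ∈ M t'} (fun _ => W u) t :=
        lintegral_tsum fun u => (measurable_const.indicator (hSmeas u)).aemeasurable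
    _ ≤ ∑' u : List (Fin m), W u * c' u := by
        refine ENNReal.tsum_le_tsum fun u => ?_
        rw [lintegral_indicator (hSmeas u), setLIntegral_const,
          Measure.restrict_apply (hSmeas u)]
        exact mul_le_mul_right (hvol u) _
    _ = ∑' i, c i * μ (Φ.cyl (q i)) ^ (α / s) := by
        have he : ∀ u, W u * c' u = ∑' i, if q i = u then W (q i) * c i else 0 := by
          intro u
          rw [hc']
          simp only
          rw [← ENNReal.tsum_mul_left]
          refine tsum_congr fun i => ?_
          by_cases h : q i = u <;> simp [h]
        rw [tsum_congr he, ENNReal.tsum_comm]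
        refine tsum_congr fun i => ?_
        rw [tsum_eq_single (q i) (fun u hu => by simp [Ne.symm hu])]
        simp [hW, mul_comm]

end IFS


lemma arith_grid (T : ℝ≥0∞) (ε : ℝ) (hε : 0 < ε) :
    T ≤ ∑' k : ℕ, if ENNReal.ofReal (ε * k) < T then ENNReal.ofReal ε else 0 := by
  classical
  rcases eq_or_ne T ⊤ with rfl | hT
  · have he : ∀ k : ℕ, (if ENNReal.ofReal (ε * k) < (⊤:ℝ≥0∞) then ENNReal.ofReal ε else 0)
        = ENNReal.ofReal ε := fun k => if_pos ENNReal.ofReal_lt_top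
    rw [tsum_congr he, ENNReal.tsum_const_eq_top_of_ne_zero]
    simp [ENNReal.ofReal_pos.mpr hε, ne_of_gt (ENNReal.ofReal_pos.mpr hε)]
  · by_cases hT0 : T = 0
    · simp [hT0]
    have hTpos : 0 < T.toReal := ENNReal.toReal_pos hT0 hT
    set n := ⌈T.toReal / ε⌉₊ with hn
    have hmain : T ≤ (n : ℝ≥0∞) * ENNReal.ofReal ε := by
      have h1 : T.toReal ≤ n * ε := (div_le_iff₀ hε).mp (Nat.le_ceil _)
      calc T = ENNReal.ofReal T.toReal := (ENNReal.ofReal_toReal hT).symm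
        _ ≤ ENNReal.ofReal ((n : ℝ) * ε) := ENNReal.ofReal_le_ofReal h1
        _ = ENNReal.ofReal (n : ℝ) * ENNReal.ofReal ε := ENNReal.ofReal_mul (by positivity)
        _ = (n : ℝ≥0∞) * ENNReal.ofReal ε := by rw [ENNReal.ofReal_natCast]
    refine hmain.trans ?_
    have h2 : (n : ℝ≥0∞) * ENNReal.ofReal ε = ∑ k ∈ Finset.range n, ENNReal.ofReal ε := by
      rw [Finset.sum_const, Finset.card_range, nsmul_eq_mul]
    rw [h2]
    refine le_trans (le_of_eq (Finset.sum_congr rfl fun k hk => ?_)) (ENNReal.sum_le_tsum _)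
    have hk' : (k : ℝ) < T.toReal / ε := Nat.lt_ceil.mp (Finset.mem_range.mp hk)
    have hlt : ε * k < T.toReal := by
      rw [mul_comm]; exact (lt_div_iff₀ hε).mp hk'
    rw [if_pos]
    calc ENNReal.ofReal (ε * k) < ENNReal.ofReal T.toReal :=
          (ENNReal.ofReal_lt_ofReal_iff hTpos).mpr hlt
      _ = T := ENNReal.ofReal_toReal hT

namespace IFS

lemma exists_cover_family {d m : ℕ} (Φ : IFS d m) (μ : Measure (Pt d)) (s α : ℝ)
    (hμK : μ Φ.K = 1) (g : Pt d → ℝ≥0∞) {σ : ℝ≥0∞} (hσ0 : σ ≠ 0) (hσt : σ ≠ ⊤) :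
    ∃ c : ℕ × List (Fin m) → ℝ≥0∞,
      (∀ x ∈ Φ.K, g x ≤ ∑' i : ℕ × List (Fin m), (Φ.cyl i.2).indicator (fun _ => c i) x) ∧
      ∑' i : ℕ × List (Fin m), c i * μ (Φ.cyl i.2) ^ (α / s)
        ≤ choquetInt (Φ.hContent μ s α) Φ.K g + σ := by
  classical
  set ε : ℝ := σ.toReal / 2 with hεdef
  have hε : 0 < ε := div_pos (ENNReal.toReal_pos hσ0 hσt) two_pos
  obtain ⟨δ, hδpos, hδsum⟩ := ENNReal.exists_pos_sum_of_countable' one_ne_zero ℕ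
  set A : ℕ → Set (Pt d) := fun k => {x ∈ Φ.K | ENNReal.ofReal (ε * k) < g x} with hA
  have hcovs : ∀ k : ℕ, ∃ C : Set (List (Fin m)), C.Countable ∧
      (A k ⊆ ⋃ w ∈ C, Φ.cyl w) ∧
      ∑' w : C, μ (Φ.cyl w.1) ^ (α / s) ≤ Φ.hContent μ s α (A k) + δ k := by
    intro k
    have hfin : Φ.hContent μ s α (A k) ≠ ⊤ :=
      ne_top_of_le_ne_top ENNReal.one_ne_top
        (Φ.hContent_le_one μ s α hμK (Set.sep_subset _ _))
    have hlt : Φ.hContent μ s α (A k) < Φ.hContent μ s α (A k) + δ k :=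
      ENNReal.lt_add_right hfin (ne_of_gt (hδpos k))
    obtain ⟨C, hC⟩ := iInf_lt_iff.mp hlt
    obtain ⟨h1, hC⟩ := iInf_lt_iff.mp hC
    obtain ⟨h2, hC⟩ := iInf_lt_iff.mp hC
    exact ⟨C, h1, h2, le_of_lt hC⟩
  choose C hCc hCcov hCsum using hcovs
  refine ⟨fun p => if p.2 ∈ C p.1 then ENNReal.ofReal ε else 0, ?_, ?_⟩
  · intro x hx
    refine (arith_grid (g x) ε hε).trans ?_
    rw [ENNReal.tsum_prod']
    refine ENNReal.tsum_le_tsum fun k => ?_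
    by_cases hk : ENNReal.ofReal (ε * k) < g x
    · have hAx : x ∈ A k := ⟨hx, hk⟩
      obtain ⟨w0, hw0C, hxw0⟩ : ∃ w ∈ C k, x ∈ Φ.cyl w := by
        simpa using hCcov k hAx
      rw [if_pos hk]
      refine le_trans ?_ (ENNReal.le_tsum w0)
      rw [Set.indicator_of_mem hxw0]
      simp [hw0C]
    · rw [if_neg hk]; exact zero_le
  · rw [ENNReal.tsum_prod']
    have hinner : ∀ k : ℕ, (∑' w : List (Fin m),
        (if w ∈ C k then ENNReal.ofReal ε else 0) * μ (Φ.cyl w) ^ (α / s))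
        ≤ ENNReal.ofReal ε * (Φ.hContent μ s α (A k) + δ k) := by
      intro k
      have he : ∀ w : List (Fin m), (if w ∈ C k then ENNReal.ofReal ε else 0) * μ (Φ.cyl w) ^ (α / s)
          = ENNReal.ofReal ε * (C k).indicator (fun w => μ (Φ.cyl w) ^ (α / s)) w := by
        intro w
        by_cases h : w ∈ C k <;> simp [h, Set.indicator_apply]
      rw [tsum_congr he, ENNReal.tsum_mul_left,
        ← tsum_subtype (C k) (fun w => μ (Φ.cyl w) ^ (α / s))]
      exact mul_le_mul_right (hCsum k) _
    refine le_trans (ENNReal.tsum_le_tsum hinner) ?_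
    rw [tsum_congr (fun k => mul_add (ENNReal.ofReal ε) _ _), ENNReal.tsum_add,
      ENNReal.tsum_mul_left, ENNReal.tsum_mul_left]
    have hδ1 : ENNReal.ofReal ε * ∑' k, δ k ≤ ENNReal.ofReal ε :=
      le_trans (mul_le_mul_right (le_of_lt hδsum) _) (le_of_eq (mul_one _))
    have hsplit0 : (∑' k : ℕ, ENNReal.ofReal ε * Φ.hContent μ s α (A k))
        = ENNReal.ofReal ε * Φ.hContent μ s α (A 0)
          + ∑' k : ℕ, ENNReal.ofReal ε * Φ.hContent μ s α (A (k+1)) :=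
      tsum_eq_zero_add' ENNReal.summable
    have hA0 : ENNReal.ofReal ε * Φ.hContent μ s α (A 0) ≤ ENNReal.ofReal ε :=
      le_trans (mul_le_mul_right (Φ.hContent_le_one μ s α hμK (Set.sep_subset _ _)) _)
        (le_of_eq (mul_one _))
    have hio : ∀ k : ℕ, ENNReal.ofReal ε * Φ.hContent μ s α (A (k+1))
        ≤ ∫⁻ t in Set.Ioc (ε * k) (ε * k + ε),
            Φ.hContent μ s α {x ∈ Φ.K | ENNReal.ofReal t < g x} := by
      intro k
      have hconst : ENNReal.ofReal ε * Φ.hContent μ s α (A (k+1))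
          = ∫⁻ _ in Set.Ioc (ε * k) (ε * k + ε), Φ.hContent μ s α (A (k+1)) := by
        rw [setLIntegral_const, Real.volume_Ioc, mul_comm]
        congr 1
        rw [add_sub_cancel_left]
      rw [hconst]
      refine setLIntegral_mono' measurableSet_Ioc fun t ht => ?_
      refine Φ.hContent_mono μ s α ?_
      rintro x ⟨hxK, hxg⟩
      refine ⟨hxK, lt_of_le_of_lt (ENNReal.ofReal_le_ofReal ?_) hxg⟩
      push_cast
      have := ht.2
      linarith
    have hdisj : Pairwise (Function.onFun Disjoint fun k : ℕ => Set.Ioc (ε * k) (ε * k + ε)) := by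
      have key : ∀ j k : ℕ, j < k →
          Disjoint (Set.Ioc (ε * j) (ε * j + ε)) (Set.Ioc (ε * k) (ε * k + ε)) := by
        intro j k h
        rw [Set.disjoint_left]
        rintro t ⟨_, ht2⟩ ⟨ht3, _⟩
        have hjk : (j : ℝ) + 1 ≤ k := by exact_mod_cast h
        nlinarith [mul_le_mul_of_nonneg_left hjk (le_of_lt hε)]
      intro j k hjk
      rcases lt_or_gt_of_ne hjk with h | h
      · exact key j k h
      · exact (key k j h).symm
    have hUnion : (∑' k : ℕ, ∫⁻ t in Set.Ioc (ε * k) (ε * k + ε),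
          Φ.hContent μ s α {x ∈ Φ.K | ENNReal.ofReal t < g x})
        ≤ choquetInt (Φ.hContent μ s α) Φ.K g := by
      rw [choquetInt, ← lintegral_iUnion (fun k => measurableSet_Ioc) hdisj]
      refine lintegral_mono_set ?_
      refine Set.iUnion_subset fun k => ?_
      rintro t ⟨ht1, _⟩
      have : (0:ℝ) ≤ ε * k := by positivity
      exact Set.mem_Ioi.mpr (lt_of_le_of_lt this ht1)
    have hεσ : ENNReal.ofReal ε + ENNReal.ofReal ε = σ := by
      rw [← ENNReal.ofReal_add (le_of_lt hε) (le_of_lt hε),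
        show ε + ε = σ.toReal by rw [hεdef]; ring]
      exact ENNReal.ofReal_toReal hσt
    calc ENNReal.ofReal ε * ∑' k, Φ.hContent μ s α (A k) + ENNReal.ofReal ε * ∑' k, δ k
        ≤ (∑' k : ℕ, ENNReal.ofReal ε * Φ.hContent μ s α (A k)) + ENNReal.ofReal ε := by
          rw [ENNReal.tsum_mul_left]
          exact add_le_add le_rfl hδ1
      _ = (ENNReal.ofReal ε * Φ.hContent μ s α (A 0)
            + ∑' k : ℕ, ENNReal.ofReal ε * Φ.hContent μ s α (A (k+1))) + ENNReal.ofReal ε := by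
          rw [hsplit0]
      _ ≤ (ENNReal.ofReal ε + choquetInt (Φ.hContent μ s α) Φ.K g) + ENNReal.ofReal ε := by
          refine add_le_add (add_le_add hA0 ?_) le_rfl
          exact le_trans (ENNReal.tsum_le_tsum hio) hUnion
      _ = choquetInt (Φ.hContent μ s α) Φ.K g + σ := by
          rw [← hεσ]; ring
end IFS


/-- Countable sublinearity of the Choquet integral with respect to `H^α_μ`. -/
theorem choquet_countably_sublinear (d m : ℕ) (Φ : IFS d m) (p : Fin m → ℝ≥0∞)
    (μ : Measure (Pt d)) (hμ : Φ.SelfSimilar p μ)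
    (s : ℝ) (hs : 0 < s) (hdim : ∑ i, Φ.r i ^ s = 1)
    (α : ℝ) (hα : 0 < α) (hαs : α ≤ s)
    (g : ℕ → Pt d → ℝ≥0∞) (hg : ∀ j, Measurable (g j)) :
    choquetInt (Φ.hContent μ s α) Φ.K (fun x => ∑' j, g j x) ≤
      ∑' j, choquetInt (Φ.hContent μ s α) Φ.K (g j) := by
  classical
  have hμK : μ Φ.K = 1 := hμ.2.2.2.1
  refine ENNReal.le_of_forall_pos_le_add fun η hη _ => ?_
  obtain ⟨σ, hσpos, hσsum⟩ :=
    ENNReal.exists_pos_sum_of_countable' (ε := (η : ℝ≥0∞)) (by exact_mod_cast hη.ne') ℕ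
  have hσt : ∀ j, σ j ≠ ⊤ := fun j =>
    ne_top_of_lt (lt_of_le_of_lt (ENNReal.le_tsum j) (lt_of_lt_of_le hσsum le_top))
  choose cs hcs1 hcs2 using fun j =>
    Φ.exists_cover_family μ s α hμK (g j) (ne_of_gt (hσpos j)) (hσt j)
  have hdom : ∀ x ∈ Φ.K, (fun x => ∑' j, g j x) x ≤
      ∑' i : ℕ × ℕ × List (Fin m),
        (Φ.cyl i.2.2).indicator (fun _ => cs i.1 i.2) x := by
    intro x hx
    calc ∑' j, g j x
        ≤ ∑' (j : ℕ) (i : ℕ × List (Fin m)), (Φ.cyl i.2).indicator (fun _ => cs j i) x :=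
          ENNReal.tsum_le_tsum fun j => hcs1 j x hx
      _ = ∑' i : ℕ × ℕ × List (Fin m), (Φ.cyl i.2.2).indicator (fun _ => cs i.1 i.2) x :=
          (ENNReal.tsum_prod' (f := fun i : ℕ × ℕ × List (Fin m) => (Φ.cyl i.2.2).indicator (fun _ => cs i.1 i.2) x)).symm
  have hmain := Φ.choquet_le_weighted_cover μ s α
    (fun i : ℕ × ℕ × List (Fin m) => cs i.1 i.2) (fun i => i.2.2)
    (fun x => ∑' j, g j x) hdom
  refine hmain.trans ?_
  calc ∑' i : ℕ × ℕ × List (Fin m), cs i.1 i.2 * μ (Φ.cyl i.2.2) ^ (α / s)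
      = ∑' (j : ℕ) (i : ℕ × List (Fin m)), cs j i * μ (Φ.cyl i.2) ^ (α / s) :=
        ENNReal.tsum_prod' (f := fun i : ℕ × ℕ × List (Fin m) => cs i.1 i.2 * μ (Φ.cyl i.2.2) ^ (α / s))
    _ ≤ ∑' j : ℕ, (choquetInt (Φ.hContent μ s α) Φ.K (g j) + σ j) :=
        ENNReal.tsum_le_tsum fun j => hcs2 j
    _ = (∑' j, choquetInt (Φ.hContent μ s α) Φ.K (g j)) + ∑' j, σ j := ENNReal.tsum_add
    _ ≤ (∑' j, choquetInt (Φ.hContent μ s α) Φ.K (g j)) + η :=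
        add_le_add le_rfl (le_of_lt hσsum)
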